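/- Let k = F_{2^m} and a, b ∈ k with a ≠ 0. The F₂-linear separable polynomial E_{a,b}(x) = a⁴x¹⁶ + b⁴x⁸ + b²x² + ax factors in k[x] as E_{a,b}(x) = x·P(x)·(1 + x⁵·P(x)) where P(x) = a²x⁵ + b²x + a. -/

import Mathlib

open Polynomial

theorem stmt_8 (m : ℕ) (k : Type*) [Field k] [Fintype k]
    (hcard : Fintype.card k = 2 ^ m)
    (a b : k) (ha : a ≠ 0) :
    C (a ^ 4) * X ^ 16 + C (b ^ 4) * X ^ 8 + C (b ^ 2) * X ^ 2 + C a * X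
      = X * (C (a ^ 2) * X ^ 5 + C (b ^ 2) * X + C a)
          * (1 + X ^ 5 * (C (a ^ 2) * X ^ 5 + C (b ^ 2) * X + C a)) := by
  have h2 : (2 : k) = 0 := by
    obtain ⟨p, -, n, hp, hn⟩ := FiniteField.card' k
    have hdvd : (p : ℕ) ∣ 2 ^ m := by
      rw [← hcard, hn]; exact dvd_pow_self p n.2.ne'
    have hp2 : p = 2 :=
      (Nat.prime_dvd_prime_iff_eq hp Nat.prime_two).mp
        (Nat.Prime.dvd_of_dvd_pow hp hdvd)
    have hz : (↑(p ^ (n : ℕ)) : k) = 0 := by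
      rw [← hn]; exact_mod_cast Nat.cast_card_eq_zero k
    rw [hp2] at hz
    push_cast at hz
    exact pow_eq_zero_iff (by exact_mod_cast n.2.ne') |>.mp hz
  have hC : (2 : k[X]) = 0 := by
    rw [show (2 : k[X]) = C 2 from (map_ofNat C 2).symm, h2, map_zero]
  simp only [C_pow]
  linear_combination (-(C a^2 * X^6 + C a^2 * C b^2 * X^12 + C a^3 * X^11
    + C a * C b^2 * X^7)) * hC
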